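/- Fix θ in (0, π/2]. The function f_θ(x) = cosh((π−θ)x) − cosh(θx) − (1 − 2θ/π)(cosh(πx) − 1) is nonpositive for all x ≥ 0. -/

import Mathlib

open Real

lemma two_sinh_mul_sinh (s t : ℝ) :
    Real.cosh (s + t) - Real.cosh (s - t) = 2 * Real.sinh s * Real.sinh t := by
  rw [Real.cosh_add, Real.cosh_sub]; ring

lemma sinh_mul_le (c u : ℝ) (hc0 : 0 ≤ c) (hc1 : c ≤ 1) (hu : 0 ≤ u) :
    Real.sinh (c*u) ≤ c * Real.sinh u := by
  have hd : ∀ t : ℝ, HasDerivAt (fun t => c * Real.sinh t - Real.sinh (c*t))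
      (c * Real.cosh t - Real.cosh (c*t) * c) t := by
    intro t
    have h1 : HasDerivAt (fun t : ℝ => c * t) c t := by
      simpa using (hasDerivAt_id t).const_mul c
    exact ((Real.hasDerivAt_sinh t).const_mul c).sub
      ((Real.hasDerivAt_sinh (c*t)).comp t h1)
  have hmono : MonotoneOn (fun t => c * Real.sinh t - Real.sinh (c*t)) (Set.Ici 0) := by
    apply monotoneOn_of_deriv_nonneg (convex_Ici 0)
    · exact (Differentiable.continuous (fun t => (hd t).differentiableAt)).continuousOn
    · intro t _
      exact (hd t).differentiableAt.differentiableWithinAt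
    · intro t ht
      rw [(hd t).deriv]
      have ht0 : 0 ≤ t := le_of_lt (by simpa using ht)
      have : Real.cosh (c*t) ≤ Real.cosh t := by
        rw [Real.cosh_le_cosh, abs_of_nonneg (mul_nonneg hc0 ht0), abs_of_nonneg ht0]
        nlinarith
      nlinarith
  have := hmono Set.self_mem_Ici hu hu
  simp only [mul_zero, Real.sinh_zero, sub_zero] at this
  linarith

theorem stmt_2 (θ : ℝ) (hθ : θ ∈ Set.Ioc 0 (π/2)) (x : ℝ) (hx : 0 ≤ x) :
    Real.cosh ((π - θ)*x) - Real.cosh (θ*x) - (1 - 2*θ/π) * (Real.cosh (π*x) - 1) ≤ 0 := by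
  obtain ⟨hθ0, hθ2⟩ := hθ
  have hπ := Real.pi_pos
  have h1 : Real.cosh ((π - θ)*x) - Real.cosh (θ*x)
      = 2 * Real.sinh (π*x/2) * Real.sinh ((π - 2*θ)*x/2) := by
    rw [show (π - θ)*x = π*x/2 + (π - 2*θ)*x/2 by ring,
        show θ*x = π*x/2 - (π - 2*θ)*x/2 by ring, two_sinh_mul_sinh]
  have h2 : Real.cosh (π*x) - 1 = 2 * Real.sinh (π*x/2) ^ 2 := by
    have h2' : Real.cosh (π*x) = Real.cosh (π*x/2) * Real.cosh (π*x/2)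
        + Real.sinh (π*x/2) * Real.sinh (π*x/2) := by
      rw [← Real.cosh_add]; ring_nf
    nlinarith [Real.cosh_sq (π*x/2)]
  rw [h1, h2]
  set u := π*x/2 with hu
  have hu0 : 0 ≤ u := by positivity
  have hs : 0 ≤ Real.sinh u := Real.sinh_nonneg_iff.2 hu0
  set c := (π - 2*θ)/π with hc
  have hc0 : 0 ≤ c := by
    rw [hc]; apply div_nonneg <;> linarith
  have hc1 : c ≤ 1 := by
    rw [hc, div_le_one hπ]; linarith
  have key : Real.sinh ((π - 2*θ)*x/2) ≤ c * Real.sinh u := by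
    have heq : (π - 2*θ)*x/2 = c * u := by
      rw [hc, hu]; field_simp
    rw [heq]
    exact sinh_mul_le c u hc0 hc1 hu0
  have hceq : 1 - 2*θ/π = c := by rw [hc]; field_simp
  rw [hceq]
  nlinarith
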